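/- arXiv:2512.23296 — 6 statements merged into one kernel-verified Lean document; each statement's English description precedes it below -/
import Mathlib

section
/- For the square initial packing with α₀ = 0 and swelling factor 1 < ξ < 2/√3 the breathing coefficient has the closed form u_bs(ξ) = (4ξ − 4)/(π(ξ² − 1)) = 4/(π(ξ + 1)); this function is strictly decreasing on (1, 2/√3), and u_bs(ξ) tends to 2/π as ξ → 1⁺. -/
open Real Set Filter

lemma key_id {ξ : ℝ} (hξ : 1 < ξ) :
    (4 * ξ - 4) / (π * (ξ ^ 2 - 1)) = 4 / (π * (ξ + 1)) := by
  have h1 : ξ - 1 ≠ 0 := by linarith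
  have h2 : ξ + 1 ≠ 0 := by linarith
  have hπ : π ≠ 0 := Real.pi_ne_zero
  have h3 : (4 * ξ - 4) / (π * (ξ ^ 2 - 1)) = 4 * (ξ - 1) / (π * (ξ + 1) * (ξ - 1)) := by
    congr 1 <;> ring
  rw [h3, mul_div_mul_right _ _ h1]

/-- For the square initial packing with `α₀ = 0` and swelling factor
`1 < ξ < 2/√3`, the breathing coefficient has the closed form
`u_bs(ξ) = (4ξ − 4)/(π(ξ² − 1)) = 4/(π(ξ + 1))`; it is strictly decreasing on
this interval and tends to `2/π` as `ξ → 1⁺`. -/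
theorem square_packing_breathing_coefficient_initial_branch :
    (∀ ξ ∈ Ioo (1 : ℝ) (2 / Real.sqrt 3),
        (4 * ξ - 4) / (π * (ξ ^ 2 - 1)) = 4 / (π * (ξ + 1))) ∧
    StrictAntiOn (fun ξ : ℝ => (4 * ξ - 4) / (π * (ξ ^ 2 - 1)))
      (Ioo (1 : ℝ) (2 / Real.sqrt 3)) ∧
    Tendsto (fun ξ : ℝ => (4 * ξ - 4) / (π * (ξ ^ 2 - 1)))
      (nhdsWithin 1 (Ioi 1)) (nhds (2 / π)) := by
  refine ⟨fun ξ hξ => key_id hξ.1, ?_, ?_⟩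
  · intro a ha b hb hab
    simp only
    rw [key_id ha.1, key_id hb.1]
    have hπ := Real.pi_pos
    apply div_lt_div_of_pos_left (by norm_num)
    · have h1 := ha.1; nlinarith [Real.pi_pos]
    · apply mul_lt_mul_of_pos_left _ hπ
      linarith
  · have h : Tendsto (fun ξ : ℝ => 4 / (π * (ξ + 1)))
        (nhdsWithin 1 (Ioi 1)) (nhds (2 / π)) := by
      have : Tendsto (fun ξ : ℝ => 4 / (π * (ξ + 1))) (nhds 1) (nhds (2 / π)) := by
        have hπ := Real.pi_pos
        have : (2 : ℝ) / π = 4 / (π * (1 + 1)) := by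
          rw [div_eq_div_iff (by positivity) (by positivity)]; ring
        rw [this]
        apply Tendsto.div tendsto_const_nhds
        · exact (tendsto_const_nhds.mul (tendsto_id.add tendsto_const_nhds))
        · positivity
      exact this.mono_left nhdsWithin_le_nhds
    refine h.congr' ?_
    filter_upwards [self_mem_nhdsWithin] with ξ hξ
    exact (key_id hξ).symm
end

section
/- For the square initial packing with α₀ = 0 and swelling factor 1 < ξ < 2/√3, the void area strictly decreases: ΔÃ_void = (4ξ − 4) − π(ξ² − 1) < 0. Equivalently, u_bs(ξ) < 1 on this branch, so the swelling of the discs is partially absorbed by disappearance of void (regime between internal transfer and solid breathing). -/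
open Real Set

/-- For the square initial packing with `α₀ = 0` and `1 < ξ < 2/√3`, the void
area strictly decreases: `ΔÃ_void = (4ξ − 4) − π(ξ² − 1) < 0`; equivalently
`u_bs(ξ) < 1`, so the disc swelling is partially absorbed by the void. -/
theorem square_packing_void_disappearance
    (ξ : ℝ) (hξ : ξ ∈ Ioo (1 : ℝ) (2 / Real.sqrt 3)) :
    (4 * ξ - 4) - π * (ξ ^ 2 - 1) < 0 ∧
    (4 * ξ - 4) / (π * (ξ ^ 2 - 1)) < 1 := by
  obtain ⟨h1, _⟩ := hξ
  have hpi : (3.14 : ℝ) < π := by linarith [pi_gt_d6]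
  have hkey : (4 * ξ - 4) - π * (ξ ^ 2 - 1) < 0 := by
    have h2 : 0 < π * (ξ + 1) - 4 := by nlinarith
    nlinarith [mul_pos h2 (sub_pos.mpr h1)]
  have hpos : 0 < π * (ξ ^ 2 - 1) := by nlinarith
  exact ⟨hkey, by rw [div_lt_one hpos]; linarith⟩
end

section
/- Fix n ∈ ℕ and set a = 2ⁿ. Define u on [2a/√3, 4a/√3] by u(ξ) = (f(ξ) − 2√3)/(π(ξ² − 1)), where f(ξ) = 8a·√(ξ² − a²) for ξ ∈ [2a/√3, 2a] and f(ξ) = ξ²·(√3 + 2·sin(2π/3 − 2·arccos(2a/ξ))) for ξ ∈ [2a, 4a/√3]. Then u has a strict local minimum at ξ = 2a = 2^{n+1}: there is δ > 0 such that u(ξ) > u(2^{n+1}) for all ξ in the domain with 0 < |ξ − 2^{n+1}| < δ. (Local minimisation of the breathing coefficient at each 60-hexagonal configuration.) -/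
open Real Set

set_option maxHeartbeats 800000

/-- Local minimisation of the breathing coefficient at each 60-hexagonal
configuration `ξ = 2^(n+1)`: with `a = 2ⁿ`, the breathing coefficient `u`,
built from the two body-area branches around `ξ = 2a`, has a strict local
minimum at `ξ = 2a` within the domain `[2a/√3, 4a/√3]`. -/
theorem breathing_coefficient_strict_local_min_at_60hexagonal
    (n : ℕ) (a : ℝ) (ha : a = 2 ^ n)
    (f : ℝ → ℝ)
    (hf₁ : ∀ ξ ∈ Icc (2 * a / Real.sqrt 3) (2 * a),
      f ξ = 8 * a * Real.sqrt (ξ ^ 2 - a ^ 2))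
    (hf₂ : ∀ ξ ∈ Icc (2 * a) (4 * a / Real.sqrt 3),
      f ξ = ξ ^ 2 * (Real.sqrt 3 +
        2 * Real.sin (2 * π / 3 - 2 * Real.arccos (2 * a / ξ))))
    (u : ℝ → ℝ)
    (hu : ∀ ξ ∈ Icc (2 * a / Real.sqrt 3) (4 * a / Real.sqrt 3),
      u ξ = (f ξ - 2 * Real.sqrt 3) / (π * (ξ ^ 2 - 1))) :
    ∃ δ > 0, ∀ ξ ∈ Icc (2 * a / Real.sqrt 3) (4 * a / Real.sqrt 3),
      0 < |ξ - 2 * a| → |ξ - 2 * a| < δ → u ξ > u (2 * a) := by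
  have ha1 : (1:ℝ) ≤ a := by rw [ha]; exact one_le_pow₀ (by norm_num)
  have ha0 : (0:ℝ) < a := lt_of_lt_of_le one_pos ha1
  set s3 := Real.sqrt 3 with hs3def
  have hs3sq : s3 ^ 2 = 3 := Real.sq_sqrt (by norm_num)
  have hs3pos : 0 < s3 := Real.sqrt_pos.mpr (by norm_num)
  have hs3lt2 : s3 < 2 := by nlinarith
  have hs3gt32 : 3 / 2 < s3 := by nlinarith
  have hpi : 0 < π := Real.pi_pos
  have h2amem : 2 * a ∈ Icc (2 * a / s3) (4 * a / s3) := by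
    constructor
    · rw [div_le_iff₀ hs3pos]; nlinarith
    · rw [le_div_iff₀ hs3pos]; nlinarith
  have hsqrt3a : Real.sqrt ((2*a) ^ 2 - a ^ 2) = a * s3 := by
    rw [show (2*a) ^ 2 - a ^ 2 = (a * s3) ^ 2 by nlinarith]
    exact Real.sqrt_sq (by positivity)
  have hu2a : u (2 * a) = 2 * s3 / π := by
    rw [hu _ h2amem, hf₁ _ ⟨h2amem.1, le_refl _⟩, hsqrt3a]
    have h1 : (1:ℝ) < (2*a) ^ 2 := by nlinarith
    rw [div_eq_div_iff (by nlinarith : π * ((2*a) ^ 2 - 1) ≠ 0) (ne_of_gt hpi)]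
    ring
  refine ⟨4 * a / s3 - 2 * a, ?_, ?_⟩
  · rw [gt_iff_lt, sub_pos, lt_div_iff₀ hs3pos]; nlinarith
  intro ξ hξ hne hδ
  have hξlb : 2 * a / s3 ≤ ξ := hξ.1
  have hξ1 : 1 < ξ := by
    have h2s : 2 / s3 ≤ 2 * a / s3 := by gcongr; linarith
    have h2 : 1 < 2 / s3 := by rw [lt_div_iff₀ hs3pos]; nlinarith
    linarith
  have hξpos : 0 < ξ := by linarith
  have hden : 0 < ξ ^ 2 - 1 := by nlinarith
  rw [hu _ hξ, hu2a, gt_iff_lt, div_lt_div_iff₀ hpi (by positivity)]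
  have key : f ξ > 2 * s3 * ξ ^ 2 := by
    have habs := abs_lt.mp hδ
    have hne' : ξ ≠ 2 * a := by
      intro h; rw [h] at hne; simp at hne
    rcases lt_or_gt_of_ne hne' with hlt | hgt
    · -- branch 1 : ξ < 2a
      rw [hf₁ _ ⟨hξ.1, hlt.le⟩]
      have hlow : 4 * a - 4 * a / s3 < ξ := by linarith [habs.1]
      have h4s : s3 * (4 * a / s3) = 4 * a := by field_simp
      have hsx : 2 * a < s3 * ξ := by
        nlinarith [mul_lt_mul_of_pos_left hlow hs3pos,
          mul_pos ha0 (show (0:ℝ) < s3 - 3/2 by linarith)]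
      have h3x : 4 * a ^ 2 < 3 * ξ ^ 2 := by
        nlinarith [mul_pos (sub_pos.mpr hsx) (show (0:ℝ) < s3 * ξ + 2 * a by positivity)]
      set r := Real.sqrt (ξ ^ 2 - a ^ 2) with hrdef
      have hr2 : r ^ 2 = ξ ^ 2 - a ^ 2 := Real.sq_sqrt (by nlinarith [sq_nonneg a, h3x])
      have hr0 : 0 ≤ r := Real.sqrt_nonneg _
      have hx4 : ξ ^ 2 < 4 * a ^ 2 := by nlinarith [mul_lt_mul_of_pos_left hlt hξpos]
      have hprod : 0 < (4 * a ^ 2 - ξ ^ 2) * (3 * ξ ^ 2 - 4 * a ^ 2) :=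
        mul_pos (by linarith) (by linarith)
      have h16 : (4 * a * r) ^ 2 = 16 * a ^ 2 * (ξ ^ 2 - a ^ 2) := by
        linear_combination 16 * a ^ 2 * hr2
      have h3ξ : (s3 * ξ ^ 2) ^ 2 = 3 * ξ ^ 4 := by
        linear_combination ξ ^ 4 * hs3sq
      have hsq : (s3 * ξ ^ 2) ^ 2 < (4 * a * r) ^ 2 := by
        rw [h16, h3ξ]; nlinarith [hprod]
      have hlt' : s3 * ξ ^ 2 < 4 * a * r :=
        lt_of_pow_lt_pow_left₀ 2 (by positivity) hsq
      linarith
    · -- branch 2 : ξ > 2a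
      rw [hf₂ _ ⟨hgt.le, hξ.2⟩]
      set c := 2 * a / ξ with hcdef
      have hc1 : c < 1 := by rw [hcdef, div_lt_one hξpos]; exact hgt
      have h4s : s3 * (4 * a / s3) = 4 * a := by field_simp
      have hclb : s3 / 2 < c := by
        rw [hcdef, div_lt_div_iff₀ (by norm_num : (0:ℝ) < 2) hξpos]
        have hub : ξ < 4 * a / s3 := by linarith [habs.2]
        nlinarith [mul_lt_mul_of_pos_left hub hs3pos]
      have hc0 : 0 < c := by linarith
      have hcc : Real.cos (Real.arccos c) = c := Real.cos_arccos (by linarith) hc1.le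
      have hsc : Real.sin (Real.arccos c) = Real.sqrt (1 - c ^ 2) := Real.sin_arccos c
      set s := Real.sqrt (1 - c ^ 2) with hsdef
      have hs2 : s ^ 2 = 1 - c ^ 2 := Real.sq_sqrt (by nlinarith)
      have hspos : 0 < s := Real.sqrt_pos.mpr (by nlinarith)
      set θ := Real.arccos c with hθdef
      have hS : Real.sin (2 * π / 3 - 2 * θ) = s3 / 2 * (2 * c ^ 2 - 1) + s * c := by
        rw [Real.sin_sub, Real.cos_two_mul, Real.sin_two_mul, hcc, hsc]
        rw [show (2 * π / 3 : ℝ) = π - π / 3 by ring, Real.sin_pi_sub, Real.cos_pi_sub,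
          Real.sin_pi_div_three, Real.cos_pi_div_three]
        ring
      rw [hS]
      have hcsq : (s3 * s) ^ 2 < c ^ 2 := by
        have h34 : 3 / 4 < c ^ 2 := by nlinarith
        have : (s3 * s) ^ 2 = 3 * (1 - c ^ 2) := by
          linear_combination s ^ 2 * hs3sq + 3 * hs2
        rw [this]; nlinarith
      have hcs : s3 * s < c := lt_of_pow_lt_pow_left₀ 2 hc0.le hcsq
      have hs3s2 : s3 * s ^ 2 = s3 * (1 - c ^ 2) := by rw [hs2]
      have hkey2 : 2 * s3 < s3 + 2 * (s3 / 2 * (2 * c ^ 2 - 1) + s * c) := by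
        linarith [mul_pos hspos (sub_pos.mpr hcs), hs3s2]
      linarith [mul_lt_mul_of_pos_left hkey2 (show (0:ℝ) < ξ ^ 2 by positivity)]
  linarith [mul_lt_mul_of_pos_right
    (show 2 * s3 * (ξ ^ 2 - 1) < f ξ - 2 * s3 by linarith) hpi]
end

section
/- Fix an integer n ≥ 1 and set a = 2ⁿ. Define u on [a, 2a] by u(ξ) = (f(ξ) − 2√3)/(π(ξ² − 1)), where f(ξ) = ξ²·(√3 + 2·sin(2π/3 − 2·arccos(a/ξ))) for ξ ∈ [a, 2a/√3] and f(ξ) = 8a·√(ξ² − a²) for ξ ∈ [2a/√3, 2a]. Then u has a strict local minimum at ξ = 2a/√3 = 2^{n+1}·√3/3: there is δ > 0 such that u(ξ) > u(2a/√3) for all ξ ∈ [a, 2a] with 0 < |ξ − 2a/√3| < δ. (Local minimisation of the breathing coefficient at each 30-hexagonal configuration.) -/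
open Real Set

set_option maxHeartbeats 1000000

/-- Local minimisation of the breathing coefficient at each 30-hexagonal
configuration `ξ = 2a/√3 = 2^(n+1)·√3/3`: with `n ≥ 1` and `a = 2ⁿ`, the
breathing coefficient `u`, built from the two body-area branches on `[a, 2a]`,
has a strict local minimum at `ξ = 2a/√3`. -/
theorem breathing_coefficient_strict_local_min_at_30hexagonal
    (n : ℕ) (hn : 1 ≤ n) (a : ℝ) (ha : a = 2 ^ n)
    (f : ℝ → ℝ)
    (hf₁ : ∀ ξ ∈ Icc a (2 * a / Real.sqrt 3),
      f ξ = ξ ^ 2 * (Real.sqrt 3 +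
        2 * Real.sin (2 * π / 3 - 2 * Real.arccos (a / ξ))))
    (hf₂ : ∀ ξ ∈ Icc (2 * a / Real.sqrt 3) (2 * a),
      f ξ = 8 * a * Real.sqrt (ξ ^ 2 - a ^ 2))
    (u : ℝ → ℝ)
    (hu : ∀ ξ ∈ Icc a (2 * a),
      u ξ = (f ξ - 2 * Real.sqrt 3) / (π * (ξ ^ 2 - 1))) :
    ∃ δ > 0, ∀ ξ ∈ Icc a (2 * a),
      0 < |ξ - 2 * a / Real.sqrt 3| → |ξ - 2 * a / Real.sqrt 3| < δ →
        u ξ > u (2 * a / Real.sqrt 3) := by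
  have hs3 : Real.sqrt 3 ^ 2 = 3 := Real.sq_sqrt (by norm_num)
  have hs3pos : 0 < Real.sqrt 3 := Real.sqrt_pos.mpr (by norm_num)
  have hs3lt2 : Real.sqrt 3 < 2 := by nlinarith
  have hs3gt1 : 1 < Real.sqrt 3 := by nlinarith
  have ha2 : (2:ℝ) ≤ a := by
    rw [ha]
    calc (2:ℝ) = 2 ^ 1 := by norm_num
    _ ≤ 2 ^ n := by exact pow_le_pow_right₀ (by norm_num) hn
  set c := 2 * a / Real.sqrt 3 with hc
  have hapos : 0 < a := by linarith
  have hca : a < c := by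
    rw [hc, lt_div_iff₀ hs3pos]; nlinarith
  have hc2a : c < 2 * a := by
    rw [hc, div_lt_iff₀ hs3pos]; nlinarith
  have hcpos : 0 < c := lt_trans hapos hca
  have hc2 : c ^ 2 = 4 * a ^ 2 / 3 := by
    rw [hc, div_pow, hs3]; ring
  have hcmem : c ∈ Icc a (2 * a) := ⟨le_of_lt hca, le_of_lt hc2a⟩
  have hfc : f c = 8 * a * Real.sqrt (c ^ 2 - a ^ 2) :=
    hf₂ c ⟨le_refl c, le_of_lt hc2a⟩
  have hsqc : Real.sqrt (c ^ 2 - a ^ 2) = a / Real.sqrt 3 := by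
    have h2 : (a / Real.sqrt 3) ^ 2 = a ^ 2 / 3 := by rw [div_pow, hs3]
    have h : c ^ 2 - a ^ 2 = (a / Real.sqrt 3) ^ 2 := by rw [h2, hc2]; ring
    rw [h, Real.sqrt_sq (by positivity)]
  have hpi := Real.pi_pos
  have huc : u c = 2 * Real.sqrt 3 / π := by
    rw [hu c hcmem, hfc, hsqc, hc2]
    rw [div_eq_div_iff (ne_of_gt (mul_pos hpi (by nlinarith))) (ne_of_gt hpi)]
    field_simp
    linear_combination (-8 * a ^ 2) * hs3
  refine ⟨min (c - a) (2 * a - c), lt_min (by linarith) (by linarith), ?_⟩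
  intro ξ hξmem hne hδ
  obtain ⟨hξa, hξ2a⟩ := hξmem
  have hδ1 : |ξ - c| < c - a := lt_of_lt_of_le hδ (min_le_left _ _)
  have hδ2 : |ξ - c| < 2 * a - c := lt_of_lt_of_le hδ (min_le_right _ _)
  have hξne : ξ ≠ c := sub_ne_zero.mp (abs_pos.mp hne)
  have key : 2 * Real.sqrt 3 * ξ ^ 2 < f ξ := by
    rcases lt_or_gt_of_ne hξne with hlt | hgt
    · -- left branch
      have hξa' : a < ξ := by
        have h := (abs_lt.mp hδ1).1; linarith
      have hξpos : 0 < ξ := by linarith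
      have hfξ : f ξ = ξ ^ 2 * (Real.sqrt 3 +
          2 * Real.sin (2 * π / 3 - 2 * Real.arccos (a / ξ))) :=
        hf₁ ξ ⟨hξa, le_of_lt hlt⟩
      set x := a / ξ with hx
      have hx1 : x < 1 := (div_lt_one hξpos).mpr hξa'
      have hx0 : Real.sqrt 3 / 2 < x := by
        rw [hx, div_lt_div_iff₀ (by norm_num) hξpos]
        have : ξ * Real.sqrt 3 < 2 * a := by
          have := hlt
          rw [hc, lt_div_iff₀ hs3pos] at this
          linarith
        linarith
      set θ := Real.arccos x with hθ
      have hθ0 : 0 < θ := Real.arccos_pos.mpr hx1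
      have hθpi : θ ≤ π := Real.arccos_le_pi x
      have hcosθ : Real.cos θ = x :=
        Real.cos_arccos (by nlinarith) (le_of_lt hx1)
      have hθ6 : θ < π / 6 := by
        have hmem1 : π / 6 ∈ Icc 0 π := ⟨by positivity, by linarith⟩
        have hmem2 : θ ∈ Icc 0 π := ⟨le_of_lt hθ0, hθpi⟩
        have := (Real.strictAntiOn_cos.lt_iff_gt hmem1 hmem2)
        rw [Real.cos_pi_div_six, hcosθ] at this
        exact this.mp hx0
      have hφgt : π / 3 < 2 * π / 3 - 2 * θ := by linarith
      have hφlt : 2 * π / 3 - 2 * θ < 2 * π / 3 := by linarith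
      have hsin : Real.sqrt 3 / 2 < Real.sin (2 * π / 3 - 2 * θ) := by
        set φ := 2 * π / 3 - 2 * θ with hφ
        by_cases hφ2 : φ ≤ π / 2
        · have hm1 : π / 3 ∈ Icc (-(π / 2)) (π / 2) :=
            ⟨by linarith, by linarith⟩
          have hm2 : φ ∈ Icc (-(π / 2)) (π / 2) := ⟨by linarith, hφ2⟩
          have := Real.strictMonoOn_sin hm1 hm2 hφgt
          rwa [Real.sin_pi_div_three] at this
        · push_neg at hφ2
          have hm1 : π / 3 ∈ Icc (-(π / 2)) (π / 2) :=
            ⟨by linarith, by linarith⟩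
          have hm2 : π - φ ∈ Icc (-(π / 2)) (π / 2) :=
            ⟨by linarith, by linarith⟩
          have h2 := Real.strictMonoOn_sin hm1 hm2 (by linarith)
          rw [Real.sin_pi_div_three, Real.sin_pi_sub] at h2
          exact h2
      rw [hfξ]
      nlinarith [mul_pos (pow_pos hξpos 2) (sub_pos.mpr hsin)]
    · -- right branch
      have hξlt : ξ < 2 * a := by
        have h := (abs_lt.mp hδ2).2; linarith
      have hfξ : f ξ = 8 * a * Real.sqrt (ξ ^ 2 - a ^ 2) :=
        hf₂ ξ ⟨le_of_lt hgt, le_of_lt hξlt⟩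
      have hξ2gt : 4 * a ^ 2 / 3 < ξ ^ 2 := by nlinarith [hc2, hcpos, hgt]
      have hξ2lt : ξ ^ 2 < 4 * a ^ 2 := by nlinarith
      set S := Real.sqrt (ξ ^ 2 - a ^ 2) with hS
      have hSnn : 0 ≤ S := Real.sqrt_nonneg _
      have hS2 : S ^ 2 = ξ ^ 2 - a ^ 2 := Real.sq_sqrt (by nlinarith)
      rw [hfξ]
      have hfac : 0 < (3 * ξ ^ 2 - 4 * a ^ 2) * (4 * a ^ 2 - ξ ^ 2) :=
        mul_pos (by linarith) (by linarith)
      refine lt_of_pow_lt_pow_left₀ 2 (by positivity) ?_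
      have h1 : (2 * Real.sqrt 3 * ξ ^ 2) ^ 2 = 12 * ξ ^ 4 := by
        rw [mul_pow, mul_pow, hs3]; ring
      have h2 : (8 * a * S) ^ 2 = 64 * a ^ 2 * (ξ ^ 2 - a ^ 2) := by
        rw [mul_pow, hS2]; ring
      rw [h1, h2]; nlinarith
  rw [huc, hu ξ ⟨hξa, hξ2a⟩, gt_iff_lt,
    div_lt_div_iff₀ hpi (mul_pos hpi (by nlinarith : (0:ℝ) < ξ ^ 2 - 1))]
  nlinarith [key, hpi]
end

section
/- Define F : [1, ∞) → ℝ as follows: for ξ ≥ 1 let n be the unique natural number with 2ⁿ ≤ ξ < 2^{n+1}, and set F(ξ) = ξ²·(√3 + 2·sin(2π/3 − 2·arccos(2ⁿ/ξ))) if 2ⁿ ≤ ξ < 2^{n+1}/√3 and F(ξ) = 8·2ⁿ·√(ξ² − 4ⁿ) if 2^{n+1}/√3 ≤ ξ < 2^{n+1}. Then F is continuous on [1, ∞). (The nondimensionalised body area of the 60-hexagonal initial packing with α₀ = 0 is a continuous function of the swelling factor throughout all packing transitions.) -/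
open Real Set

noncomputable def g1 (n : ℕ) (ξ : ℝ) : ℝ :=
  ξ ^ 2 * (Real.sqrt 3 + 2 * Real.sin (2 * π / 3 - 2 * Real.arccos (2 ^ n / ξ)))

noncomputable def g2 (n : ℕ) (ξ : ℝ) : ℝ :=
  8 * 2 ^ n * Real.sqrt (ξ ^ 2 - 4 ^ n)

lemma sqrt3_sq : Real.sqrt 3 ^ 2 = 3 := Real.sq_sqrt (by norm_num)

lemma sqrt3_pos : (0 : ℝ) < Real.sqrt 3 := Real.sqrt_pos.mpr (by norm_num)

lemma one_lt_sqrt3 : (1 : ℝ) < Real.sqrt 3 := by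
  nlinarith [sqrt3_sq, sqrt3_pos]

lemma sqrt3_lt_two : Real.sqrt 3 < 2 := by
  nlinarith [sqrt3_sq, sqrt3_pos]

lemma four_pow (n : ℕ) : (4 : ℝ) ^ n = (2 ^ n) ^ 2 := by
  rw [show (4 : ℝ) = 2 ^ 2 by norm_num, ← pow_mul, ← pow_mul, mul_comm]

lemma b_lt (k : ℕ) : (2 : ℝ) ^ (k + 1) / Real.sqrt 3 < 2 ^ (k + 1) :=
  div_lt_self (by positivity) one_lt_sqrt3

lemma lt_b (k : ℕ) : (2 : ℝ) ^ k < 2 ^ (k + 1) / Real.sqrt 3 := by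
  rw [lt_div_iff₀ sqrt3_pos, pow_succ]
  nlinarith [sqrt3_lt_two, pow_pos (show (0:ℝ) < 2 by norm_num) k]

lemma g1_cont (n : ℕ) : ContinuousOn (g1 n) (Ici (1 : ℝ)) := by
  unfold g1
  apply ContinuousOn.mul ((continuous_pow 2).continuousOn)
  apply ContinuousOn.add continuousOn_const
  apply ContinuousOn.mul continuousOn_const
  apply Real.continuous_sin.comp_continuousOn
  apply ContinuousOn.sub continuousOn_const
  apply ContinuousOn.mul continuousOn_const
  apply Real.continuous_arccos.comp_continuousOn
  exact continuousOn_const.div continuousOn_id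
    (fun x hx => by intro h; rw [h] at hx; simp at hx; linarith)

lemma g2_cont (n : ℕ) : Continuous (g2 n) := by
  unfold g2
  exact continuous_const.mul (Real.continuous_sqrt.comp
    ((continuous_pow 2).sub continuous_const))

lemma M1 (n : ℕ) :
    g1 n ((2 : ℝ) ^ (n + 1) / Real.sqrt 3) = g2 n ((2 : ℝ) ^ (n + 1) / Real.sqrt 3) := by
  have s3 := sqrt3_sq
  have s0 := sqrt3_pos
  have hq : (0 : ℝ) < 2 ^ n := by positivity
  have hdiv : (2 : ℝ) ^ n / ((2 : ℝ) ^ (n + 1) / Real.sqrt 3) = Real.sqrt 3 / 2 := by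
    rw [pow_succ]
    field_simp
  have harc : Real.arccos (Real.sqrt 3 / 2) = π / 6 := by
    rw [← Real.cos_pi_div_six]
    exact Real.arccos_cos (by positivity) (by linarith [Real.pi_pos])
  unfold g1 g2
  rw [hdiv, harc, show 2 * π / 3 - 2 * (π / 6) = π / 3 by ring, Real.sin_pi_div_three]
  have hx2 : ((2 : ℝ) ^ (n + 1) / Real.sqrt 3) ^ 2 = 4 * (2 ^ n) ^ 2 / 3 := by
    rw [div_pow, s3, pow_succ]
    ring
  rw [hx2, four_pow n,
    show (4 * ((2:ℝ) ^ n) ^ 2 / 3 - (2 ^ n) ^ 2) = ((2 ^ n) / Real.sqrt 3) ^ 2 by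
      rw [div_pow, s3]; ring,
    Real.sqrt_sq (by positivity)]
  field_simp
  nlinarith [s3, s0, hq]

lemma M2 (n : ℕ) :
    g2 n ((2 : ℝ) ^ (n + 1)) = g1 (n + 1) ((2 : ℝ) ^ (n + 1)) := by
  have s3 := sqrt3_sq
  have hq : (0 : ℝ) < 2 ^ n := by positivity
  unfold g1 g2
  have hdiv : (2 : ℝ) ^ (n + 1) / (2 : ℝ) ^ (n + 1) = 1 :=
    div_self (show (0:ℝ) < 2 ^ (n+1) by positivity).ne'
  rw [hdiv, Real.arccos_one,
    show 2 * π / 3 - 2 * 0 = π - π / 3 by ring, Real.sin_pi_sub, Real.sin_pi_div_three,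
    show ((2 : ℝ) ^ (n + 1)) ^ 2 - 4 ^ n = (Real.sqrt 3 * 2 ^ n) ^ 2 by
      rw [mul_pow, s3, four_pow n, pow_succ]; ring,
    Real.sqrt_sq (by positivity), pow_succ]
  ring

lemma exists_n (x : ℝ) (hx : 1 ≤ x) : ∃ n : ℕ, (2 : ℝ) ^ n ≤ x ∧ x < 2 ^ (n + 1) := by
  have hex : ∃ m : ℕ, x < 2 ^ (m + 1) := by
    obtain ⟨m, hm⟩ := pow_unbounded_of_one_lt x (by norm_num : (1 : ℝ) < 2)
    exact ⟨m, lt_of_lt_of_le hm (pow_le_pow_right₀ (by norm_num) (Nat.le_succ m))⟩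
  classical
  refine ⟨Nat.find hex, ?_, Nat.find_spec hex⟩
  rcases Nat.eq_zero_or_pos (Nat.find hex) with h0 | hpos
  · rw [h0]; simpa using hx
  · obtain ⟨k, hk⟩ := Nat.exists_eq_succ_of_ne_zero hpos.ne'
    rw [hk]
    have := Nat.find_min hex (m := k) (by omega)
    push_neg at this
    exact this

lemma key {F gl gr : ℝ → ℝ} {a x c : ℝ} (hax : a ≤ x) (hxc : x < c)
    (hmem : a < x ∨ x = 1)
    (hl : ContinuousOn gl (Icc a x)) (hr : ContinuousOn gr (Icc x c))
    (el : ∀ y ∈ Icc a x, F y = gl y) (er : ∀ y ∈ Icc x c, F y = gr y) :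
    ContinuousWithinAt F (Ici 1) x := by
  have cwa : ContinuousWithinAt F (Icc a c) x := by
    rw [← Set.Icc_union_Icc_eq_Icc hax hxc.le]
    exact ((hl.congr el).continuousWithinAt ⟨hax, le_refl x⟩).union
      ((hr.congr er).continuousWithinAt ⟨le_refl x, hxc.le⟩)
  apply cwa.mono_of_mem_nhdsWithin
  rcases hmem with h | h
  · exact mem_nhdsWithin_of_mem_nhds (Icc_mem_nhds h hxc)
  · subst h
    rw [mem_nhdsWithin]
    exact ⟨Iio c, isOpen_Iio, hxc, fun y ⟨h1, h2⟩ => ⟨le_trans hax h2, le_of_lt h1⟩⟩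

/-- The nondimensionalised body area of the 60-hexagonal initial packing with
`α₀ = 0` is a continuous function of the swelling factor throughout all
packing transitions: the piecewise function `F` is continuous on `[1, ∞)`. -/
theorem body_area_continuous
    (F : ℝ → ℝ)
    (hF₁ : ∀ ξ : ℝ, ∀ n : ℕ, 2 ^ n ≤ ξ → ξ < 2 ^ (n + 1) / Real.sqrt 3 →
      F ξ = ξ ^ 2 * (Real.sqrt 3 +
        2 * Real.sin (2 * π / 3 - 2 * Real.arccos (2 ^ n / ξ))))
    (hF₂ : ∀ ξ : ℝ, ∀ n : ℕ, 2 ^ (n + 1) / Real.sqrt 3 ≤ ξ → ξ < 2 ^ (n + 1) →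
      F ξ = 8 * 2 ^ n * Real.sqrt (ξ ^ 2 - 4 ^ n)) :
    ContinuousOn F (Ici (1 : ℝ)) := by
  have E1 : ∀ k : ℕ, ∀ y ∈ Icc ((2 : ℝ) ^ k) (2 ^ (k + 1) / Real.sqrt 3),
      F y = g1 k y := by
    rintro k y ⟨hy1, hy2⟩
    rcases eq_or_lt_of_le hy2 with heq | hlt
    · have := hF₂ y k heq.ge (heq.trans_lt (b_lt k))
      rw [this, show (8 : ℝ) * 2 ^ k * Real.sqrt (y ^ 2 - 4 ^ k) = g2 k y from rfl,
        heq, M1 k]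
    · exact hF₁ y k hy1 hlt
  have E2 : ∀ k : ℕ, ∀ y ∈ Icc ((2 : ℝ) ^ (k + 1) / Real.sqrt 3) (2 ^ (k + 1)),
      F y = g2 k y := by
    rintro k y ⟨hy1, hy2⟩
    rcases eq_or_lt_of_le hy2 with heq | hlt
    · have := hF₁ y (k + 1) heq.ge (heq.trans_lt (lt_b (k + 1)))
      rw [this, show y ^ 2 * (Real.sqrt 3 +
        2 * Real.sin (2 * π / 3 - 2 * Real.arccos (2 ^ (k + 1) / y))) = g1 (k + 1) y from rfl,
        heq, ← M2 k]
    · exact hF₂ y k hy1 hlt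
  intro x hx
  obtain ⟨n, hn1, hn2⟩ := exists_n x hx
  have h1a : ∀ k : ℕ, (1 : ℝ) ≤ 2 ^ k := fun k => one_le_pow₀ (by norm_num)
  have hIcc1 : ∀ k : ℕ, ∀ u v : ℝ, (2 : ℝ) ^ k ≤ u → Icc u v ⊆ Ici (1 : ℝ) :=
    fun k u v hu y hy => le_trans (le_trans (h1a k) hu) hy.1
  rcases lt_trichotomy x ((2 : ℝ) ^ (n + 1) / Real.sqrt 3) with hxb | hxb | hxb
  · -- x < b n
    rcases eq_or_lt_of_le hn1 with heq | hlt
    · -- x = 2 ^ n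
      rcases Nat.eq_zero_or_pos n with h0 | hpos
      · -- n = 0, so x = 1
        have hx1 : x = 1 := by rw [← heq, h0, pow_zero]
        refine key (gl := g1 n) (gr := g1 n) (a := x) le_rfl hxb (Or.inr hx1) ?_ ?_ ?_ ?_
        · exact (g1_cont n).mono (fun y hy => hx1 ▸ hy.1)
        · exact (g1_cont n).mono (hIcc1 n _ _ heq.le)
        · intro y hy
          exact E1 n y ⟨heq.le.trans hy.1, hy.2.trans hxb.le⟩
        · intro y hy
          exact E1 n y ⟨heq.le.trans hy.1, hy.2⟩
      · -- n = k + 1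
        obtain ⟨k, hk⟩ := Nat.exists_eq_succ_of_ne_zero hpos.ne'
        have hax : (2 : ℝ) ^ (k + 1) / Real.sqrt 3 < x := by
          rw [← heq, hk]; exact b_lt k
        refine key (gl := g2 k) (gr := g1 n) hax.le hxb (Or.inl hax) ?_ ?_ ?_ ?_
        · exact (g2_cont k).continuousOn
        · exact (g1_cont n).mono (hIcc1 n _ _ heq.le)
        · intro y hy
          exact E2 k y ⟨hy.1, hy.2.trans (by rw [← heq, hk])⟩
        · intro y hy
          exact E1 n y ⟨heq.le.trans hy.1, hy.2⟩
    · -- 2 ^ n < x < b n : interior of first piece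
      refine key (gl := g1 n) (gr := g1 n) hn1 hxb (Or.inl hlt) ?_ ?_ ?_ ?_
      · exact (g1_cont n).mono (hIcc1 n _ _ le_rfl)
      · exact (g1_cont n).mono (hIcc1 n _ _ hn1)
      · intro y hy
        exact E1 n y ⟨hy.1, hy.2.trans hxb.le⟩
      · intro y hy
        exact E1 n y ⟨hn1.trans hy.1, hy.2⟩
  · -- x = b n
    have hlt : (2 : ℝ) ^ n < x := hxb ▸ lt_b n
    refine key (gl := g1 n) (gr := g2 n) hn1 hn2 (Or.inl hlt) ?_ ?_ ?_ ?_
    · exact (g1_cont n).mono (hIcc1 n _ _ le_rfl)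
    · exact (g2_cont n).continuousOn
    · intro y hy
      exact E1 n y ⟨hy.1, hy.2.trans hxb.le⟩
    · intro y hy
      exact E2 n y ⟨hxb.ge.trans hy.1, hy.2⟩
  · -- b n < x
    refine key (gl := g2 n) (gr := g2 n) hxb.le hn2 (Or.inl hxb) ?_ ?_ ?_ ?_
    · exact (g2_cont n).continuousOn
    · exact (g2_cont n).continuousOn
    · intro y hy
      exact E2 n y ⟨hy.1, hy.2.trans hn2.le⟩
    · intro y hy
      exact E2 n y ⟨hxb.le.trans hy.1, hy.2⟩
end

section
/- Let F : [1, ∞) → ℝ be the body-area function of the 60-hexagonal initial packing with α₀ = 0 (for ξ ≥ 1 and n the unique natural number with 2ⁿ ≤ ξ < 2^{n+1}, F(ξ) = ξ²·(√3 + 2·sin(2π/3 − 2·arccos(2ⁿ/ξ))) if ξ < 2^{n+1}/√3 and F(ξ) = 8·2ⁿ·√(ξ² − 4ⁿ) otherwise). Then for every ξ > 1 the breathing coefficient satisfies the global lower bound (F(ξ) − 2√3)/(π(ξ² − 1)) ≥ √12/π, with equality if and only if ξ is a hexagonal configuration, i.e. ξ = 2ⁿ for some integer n ≥ 1 or ξ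 = 2^{n+1}/√3 for some natural number n. -/
open Real Set

set_option maxHeartbeats 1000000 in
/-- Global lower bound for the breathing coefficient of the 60-hexagonal
initial packing with `α₀ = 0`: for every `ξ > 1`,
`(F(ξ) − 2√3)/(π(ξ² − 1)) ≥ √12/π`, with equality exactly at the hexagonal
configurations `ξ = 2ⁿ` (`n ≥ 1`) or `ξ = 2^(n+1)/√3` (`n : ℕ`). -/
theorem breathing_coefficient_global_lower_bound
    (F : ℝ → ℝ)
    (hF₁ : ∀ ξ : ℝ, ∀ n : ℕ, 2 ^ n ≤ ξ → ξ < 2 ^ (n + 1) / Real.sqrt 3 →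
      F ξ = ξ ^ 2 * (Real.sqrt 3 +
        2 * Real.sin (2 * π / 3 - 2 * Real.arccos (2 ^ n / ξ))))
    (hF₂ : ∀ ξ : ℝ, ∀ n : ℕ, 2 ^ (n + 1) / Real.sqrt 3 ≤ ξ → ξ < 2 ^ (n + 1) →
      F ξ = 8 * 2 ^ n * Real.sqrt (ξ ^ 2 - 4 ^ n)) :
    ∀ ξ : ℝ, 1 < ξ →
      (F ξ - 2 * Real.sqrt 3) / (π * (ξ ^ 2 - 1)) ≥ Real.sqrt 12 / π ∧
      ((F ξ - 2 * Real.sqrt 3) / (π * (ξ ^ 2 - 1)) = Real.sqrt 12 / π ↔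
        (∃ n : ℕ, 1 ≤ n ∧ ξ = 2 ^ n) ∨
        (∃ n : ℕ, ξ = 2 ^ (n + 1) / Real.sqrt 3)) := by
  have hs3 : Real.sqrt 3 ^ 2 = 3 := Real.sq_sqrt (by norm_num)
  have hs3pos : (0:ℝ) < Real.sqrt 3 := Real.sqrt_pos.mpr (by norm_num)
  have hs3lt2 : Real.sqrt 3 < 2 := by nlinarith [hs3, Real.sqrt_nonneg 3]
  have hs3gt1 : (1:ℝ) < Real.sqrt 3 := by nlinarith [hs3, Real.sqrt_nonneg 3]
  have hπ : 0 < π := Real.pi_pos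
  have h12 : Real.sqrt 12 = 2 * Real.sqrt 3 := by
    rw [show (12:ℝ) = 2^2 * 3 by norm_num, Real.sqrt_mul (by positivity),
      Real.sqrt_sq (by norm_num)]
  have hsin23 : Real.sin (2 * π / 3) = Real.sqrt 3 / 2 := by
    rw [show 2 * π / 3 = π - π / 3 by ring, Real.sin_pi_sub, Real.sin_pi_div_three]
  -- Backward direction: at hexagonal configurations F ξ = 2√3 ξ².
  have hback : ∀ ξ : ℝ, 0 < ξ →
      ((∃ n : ℕ, 1 ≤ n ∧ ξ = 2 ^ n) ∨ (∃ n : ℕ, ξ = 2 ^ (n + 1) / Real.sqrt 3)) →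
      F ξ = 2 * Real.sqrt 3 * ξ ^ 2 := by
    rintro ξ hξ0 (⟨k, -, rfl⟩ | ⟨k, rfl⟩)
    · have hlt : (2:ℝ) ^ k < 2 ^ (k + 1) / Real.sqrt 3 := by
        rw [lt_div_iff₀ hs3pos]
        have h2k : (0:ℝ) < 2 ^ k := by positivity
        have h2s : (2:ℝ) ^ (k+1) = 2 * 2 ^ k := by ring
        nlinarith
      have hF := hF₁ (2 ^ k) k le_rfl hlt
      rw [hF, div_self (by positivity : ((2:ℝ) ^ k) ≠ 0), Real.arccos_one,
        show 2 * π / 3 - 2 * 0 = 2 * π / 3 by ring, hsin23]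
      ring
    · have hlt : (2:ℝ) ^ (k + 1) / Real.sqrt 3 < 2 ^ (k + 1) :=
        div_lt_self (by positivity) hs3gt1
      have hF := hF₂ _ k le_rfl hlt
      have h4 : (4:ℝ) ^ k = 2 ^ k * 2 ^ k := by
        rw [show (4:ℝ) = 2 * 2 by norm_num, mul_pow]
      have h2s : (2:ℝ) ^ (k+1) = 2 * 2 ^ k := by ring
      have hξsq : ((2:ℝ) ^ (k + 1) / Real.sqrt 3) ^ 2 - 4 ^ k
          = ((2:ℝ) ^ k / Real.sqrt 3) ^ 2 := by
        rw [div_pow, div_pow, hs3, h2s, h4]; ring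
      rw [hF, hξsq, Real.sqrt_sq (by positivity), div_pow, hs3, h2s]
      field_simp
      linear_combination (-(8:ℝ)) * hs3
  intro ξ hξ
  have hξ0 : (0:ℝ) < ξ := lt_trans one_pos hξ
  have hc : 0 < π * (ξ ^ 2 - 1) := mul_pos hπ (by nlinarith)
  -- the core statement
  suffices h : F ξ ≥ 2 * Real.sqrt 3 * ξ ^ 2 ∧
      (F ξ = 2 * Real.sqrt 3 * ξ ^ 2 →
        ((∃ n : ℕ, 1 ≤ n ∧ ξ = 2 ^ n) ∨ (∃ n : ℕ, ξ = 2 ^ (n + 1) / Real.sqrt 3))) by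
    obtain ⟨hge, hfwd⟩ := h
    constructor
    · rw [ge_iff_le, div_le_div_iff₀ hπ hc, h12]
      nlinarith
    · rw [div_eq_div_iff (ne_of_gt hc) (ne_of_gt hπ), h12]
      constructor
      · intro hh
        apply hfwd
        have h0 : (F ξ - 2 * Real.sqrt 3 * ξ ^ 2) * π = 0 := by linear_combination hh
        rcases mul_eq_zero.mp h0 with h0 | h0
        · linarith
        · exact absurd h0 (ne_of_gt hπ)
      · intro hh
        have := hback ξ hξ0 hh
        linear_combination π * this
  -- find the dyadic scale m with 2^m ≤ ξ < 2^(m+1)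
  have hfl1 : 1 ≤ ⌊ξ⌋₊ := Nat.le_floor (by exact_mod_cast hξ.le)
  set m := Nat.log 2 ⌊ξ⌋₊ with hm
  have hlow : (2:ℝ) ^ m ≤ ξ := by
    have h1 : (2:ℕ) ^ m ≤ ⌊ξ⌋₊ := Nat.pow_log_le_self 2 (by omega)
    have h2 : ((2:ℕ) ^ m : ℝ) ≤ (⌊ξ⌋₊ : ℝ) := by exact_mod_cast h1
    have h3 : (⌊ξ⌋₊ : ℝ) ≤ ξ := Nat.floor_le hξ0.le
    push_cast at h2
    linarith
  have hhigh : ξ < (2:ℝ) ^ (m + 1) := by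
    have h1 : ⌊ξ⌋₊ < (2:ℕ) ^ (m + 1) := Nat.lt_pow_succ_log_self (by norm_num) _
    have h2 : ⌊ξ⌋₊ + 1 ≤ (2:ℕ) ^ (m + 1) := h1
    have h3 : ((⌊ξ⌋₊ : ℝ) + 1) ≤ ((2:ℕ) ^ (m+1) : ℝ) := by exact_mod_cast h2
    have h4 : ξ < (⌊ξ⌋₊ : ℝ) + 1 := Nat.lt_floor_add_one ξ
    push_cast at h3
    linarith
  have ha : (0:ℝ) < 2 ^ m := by positivity
  have h2s : (2:ℝ) ^ (m+1) = 2 * 2 ^ m := by ring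
  have h4m : (4:ℝ) ^ m = 2 ^ m * 2 ^ m := by
    rw [show (4:ℝ) = 2 * 2 by norm_num, mul_pow]
  by_cases hcase : ξ < 2 ^ (m + 1) / Real.sqrt 3
  · -- Case 1 : curved piece
    have hF := hF₁ ξ m hlow hcase
    set t : ℝ := 2 ^ m / ξ with htdef
    have hteq : t * ξ = 2 ^ m := div_mul_cancel₀ _ (ne_of_gt hξ0)
    have ht0 : 0 < t := by positivity
    have ht1 : t ≤ 1 := by
      rw [htdef, div_le_one hξ0]; exact hlow
    have hξs3 : ξ * Real.sqrt 3 < 2 ^ (m + 1) := (lt_div_iff₀ hs3pos).mp hcase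
    have ht3 : Real.sqrt 3 < 2 * t := by
      rw [htdef, show 2 * ((2:ℝ) ^ m / ξ) = (2 * 2 ^ m) / ξ by ring,
        lt_div_iff₀ hξ0]
      nlinarith [hξs3, h2s]
    set u : ℝ := Real.sqrt (1 - t ^ 2) with hudef
    have hu : 0 ≤ u := Real.sqrt_nonneg _
    have hu2 : u ^ 2 = 1 - t ^ 2 := Real.sq_sqrt (by nlinarith)
    have h4t : 3 < 4 * t ^ 2 := by nlinarith [ht3, hs3, hs3pos]
    have htu : Real.sqrt 3 * u < t := by
      have he : Real.sqrt 3 * u = Real.sqrt (3 * (1 - t ^ 2)) := by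
        rw [Real.sqrt_mul (by norm_num : (0:ℝ) ≤ 3), ← hudef]
      rw [he, Real.sqrt_lt' ht0]
      nlinarith [h4t]
    have hsinval : Real.sin (2 * π / 3 - 2 * Real.arccos t)
        = Real.sqrt 3 / 2 * (2 * t ^ 2 - 1) + 1 / 2 * (2 * t * u) := by
      rw [Real.sin_sub, Real.sin_two_mul, Real.cos_two_mul,
        Real.cos_arccos (by linarith) ht1, Real.sin_arccos,
        show 2 * π / 3 = π - π / 3 by ring, Real.sin_pi_sub, Real.cos_pi_sub,
        Real.sin_pi_div_three, Real.cos_pi_div_three, ← hudef]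
      ring
    have hkey : F ξ - 2 * Real.sqrt 3 * ξ ^ 2
        = 2 * ξ ^ 2 * (u * (t - Real.sqrt 3 * u)) := by
      rw [hF, hsinval]
      linear_combination (2 * Real.sqrt 3 * ξ ^ 2) * hu2
    constructor
    · have hnn : 0 ≤ u * (t - Real.sqrt 3 * u) :=
        mul_nonneg hu (by linarith)
      nlinarith [hkey, sq_nonneg ξ, hnn]
    · intro heq
      have h0 : 2 * ξ ^ 2 * (u * (t - Real.sqrt 3 * u)) = 0 := by
        rw [← hkey]; linarith
      have hu0 : u = 0 := by
        rcases mul_eq_zero.mp h0 with h01 | h01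
        · exact absurd h01 (by positivity)
        · rcases mul_eq_zero.mp h01 with h02 | h02
          · exact h02
          · linarith
      have ht2 : t ^ 2 = 1 := by
        rw [hu0] at hu2; nlinarith [hu2]
      have ht1' : t = 1 := by
        rcases mul_eq_zero.mp (show (t - 1) * (t + 1) = 0 by linear_combination ht2)
          with h | h
        · linarith
        · linarith
      have hξ2m : ξ = 2 ^ m := by
        rw [ht1', one_mul] at hteq; exact hteq
      left
      refine ⟨m, ?_, hξ2m⟩
      by_contra hm0
      have hm0' : m = 0 := by omega
      rw [hm0', pow_zero] at hξ2m
      linarith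
  · -- Case 2 : flat piece
    push_neg at hcase
    have hF := hF₂ ξ m hcase hhigh
    set a : ℝ := 2 ^ m with hadef
    set v : ℝ := Real.sqrt (ξ ^ 2 - 4 ^ m) with hvdef
    have hv : 0 ≤ v := Real.sqrt_nonneg _
    have hv2 : v ^ 2 = ξ ^ 2 - a ^ 2 := by
      rw [hvdef, Real.sq_sqrt (by nlinarith [h4m, hlow, ha]), h4m]
      ring
    have hξs3 : 2 ^ (m + 1) ≤ ξ * Real.sqrt 3 := (div_le_iff₀ hs3pos).mp hcase
    have hva : a ≤ Real.sqrt 3 * v := by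
      have h1 : 2 * a ≤ Real.sqrt 3 * ξ := by nlinarith [hξs3, h2s]
      have h2 : (2 * a) * (2 * a) ≤ (Real.sqrt 3 * ξ) * (Real.sqrt 3 * ξ) :=
        mul_le_mul h1 h1 (by positivity) (by positivity)
      have he : Real.sqrt 3 * v = Real.sqrt (3 * (ξ ^ 2 - 4 ^ m)) := by
        rw [Real.sqrt_mul (by norm_num : (0:ℝ) ≤ 3), ← hvdef]
      rw [he, Real.le_sqrt ha.le (by nlinarith [h4m, hlow, ha])]
      nlinarith [h2, hs3, h4m]
    have hvb : v < Real.sqrt 3 * a := by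
      have h1 : ξ < 2 * a := by rw [hadef, ← h2s]; exact hhigh
      rw [hvdef, Real.sqrt_lt' (by positivity)]
      have he : (Real.sqrt 3 * a) ^ 2 = 3 * a ^ 2 := by rw [mul_pow, hs3]
      rw [he]
      nlinarith [h1, hξ0, ha, h4m]
    have hkey : F ξ - 2 * Real.sqrt 3 * ξ ^ 2
        = 2 * ((Real.sqrt 3 * a - v) * (Real.sqrt 3 * v - a)) := by
      rw [hF]
      linear_combination 2 * Real.sqrt 3 * hv2 - 2 * a * v * hs3
    constructor
    · have hnn : 0 ≤ (Real.sqrt 3 * a - v) * (Real.sqrt 3 * v - a) :=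
        mul_nonneg (by linarith) (by linarith)
      nlinarith [hkey, hnn]
    · intro heq
      have h0 : 2 * ((Real.sqrt 3 * a - v) * (Real.sqrt 3 * v - a)) = 0 := by
        rw [← hkey]; linarith
      have hv0 : Real.sqrt 3 * v = a := by
        rcases mul_eq_zero.mp h0 with h01 | h01
        · norm_num at h01
        · rcases mul_eq_zero.mp h01 with h02 | h02
          · linarith
          · linarith
      right
      refine ⟨m, ?_⟩
      have h3v : 3 * v ^ 2 = a ^ 2 := by
        linear_combination (Real.sqrt 3 * v + a) * hv0 - v ^ 2 * hs3
      have hξsq : ξ ^ 2 = (2 ^ (m + 1) / Real.sqrt 3) ^ 2 := by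
        rw [div_pow, hs3]
        linear_combination -hv2 + (1/3 : ℝ) * h3v
          + ((2 ^ (m+1) + 2 * a) / 3) * h2s
      have hrpos : 0 < (2:ℝ) ^ (m + 1) / Real.sqrt 3 := by positivity
      rcases mul_eq_zero.mp (show (ξ - 2 ^ (m + 1) / Real.sqrt 3)
          * (ξ + 2 ^ (m + 1) / Real.sqrt 3) = 0 by linear_combination hξsq)
        with h | h
      · linarith
      · linarith
end
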